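/- arXiv:2212.09301 — 2 statements merged into one kernel-verified Lean document; each statement's English description precedes it below -/
import Mathlib

section
/- For any u⁰∈L²(𝕋), λ∈ℝ, M₀∈ℝ, τ>0 and N≥1, the sequence (u^n) defined from u^0=u⁰ by Scheme (A), u^{n+1}=Π^τ[e^{iτ∂_x²}e^{−4πiλM₀τ}u^n]+Π_τe^{i(τ/2)∂_x²}N_τ[e^{i(τ/2)∂_x²}Π_τu^n], has nonincreasing mass: ‖u^{n+1}‖_{L²(𝕋)} ≤ ‖u^n‖_{L²(𝕋)} for every n≥0, and in particular ‖u^n‖_{L²(𝕋)} ≤ ‖u⁰‖_{L²(𝕋)}. -/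
open MeasureTheory Real Set
open scoped ENNReal

noncomputable section

instance fact2pi : Fact (0 < 2 * π) := ⟨by positivity⟩

abbrev Torus : Type := AddCircle (2 * π)

def mult (m : ℤ → ℂ) (f : Torus → ℂ) : Torus → ℂ :=
  fun x => ∑' k : ℤ, m k * fourierCoeff f k * fourier k x

def linProp (t : ℝ) : (Torus → ℂ) → (Torus → ℂ) :=
  mult (fun k => Complex.exp (Complex.I * t * (k : ℂ) ^ 2))

def PiLe (N : ℝ) : (Torus → ℂ) → (Torus → ℂ) :=
  mult (fun k => if (|k| : ℝ) ≤ N then 1 else 0)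

def PiGt (N : ℝ) (f : Torus → ℂ) : Torus → ℂ := fun x => f x - PiLe N f x

def InHs (s : ℝ) (f : Torus → ℂ) : Prop :=
  MemLp f 2 volume ∧
    Summable (fun k : ℤ => (1 + (k : ℝ) ^ 2) ^ s * ‖fourierCoeff f k‖ ^ 2)

def cubicFun (lam : ℝ) (f : Torus → ℂ) : Torus → ℂ :=
  fun x => (lam : ℂ) * ((‖f x‖ ^ 2 : ℝ) : ℂ) * f x

def IsSolution (lam γ T : ℝ) (u0 : Torus → ℂ) (u : ℝ → Torus → ℂ) : Prop :=
  u 0 = u0 ∧ (∀ t ∈ Icc (0 : ℝ) T, InHs γ (u t)) ∧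
    ∀ t ∈ Icc (0 : ℝ) T, ∀ x,
      u t x = linProp t u0 x -
        Complex.I * ∫ s in (0 : ℝ)..t, linProp (t - s) (cubicFun lam (u s)) x

def mass (u0 : Torus → ℂ) : ℝ := (1 / (2 * π)) * ∫ x : Torus, ‖u0 x‖ ^ 2

/-- The pointwise nonlinear flow `N_t(φ) = e^{-iλt|φ|²} φ`. -/
def Nflow (lam t : ℝ) (φ : Torus → ℂ) : Torus → ℂ :=
  fun x => Complex.exp (-Complex.I * lam * t * ((‖φ x‖ ^ 2 : ℝ) : ℂ)) * φ x

/-- The modified flow `Ñ_t(φ) = e^{-iλt|Π_τφ|²} φ`. -/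
def Ntilde (lam t N : ℝ) (φ : Torus → ℂ) : Torus → ℂ :=
  fun x => Complex.exp (-Complex.I * lam * t * ((‖PiLe N φ x‖ ^ 2 : ℝ) : ℂ)) * φ x

/-- Scheme (A). -/
def SchemeA (lam M0 τ N : ℝ) (u0 : Torus → ℂ) (un : ℕ → Torus → ℂ) : Prop :=
  un 0 = u0 ∧ ∀ n : ℕ, un (n + 1) = fun x =>
    PiGt N (linProp τ (fun y => Complex.exp (-(4 * π * M0 * τ) * Complex.I * lam) * un n y)) x
      + PiLe N (linProp (τ / 2) (Nflow lam τ (linProp (τ / 2) (PiLe N (un n))))) x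

/-- Scheme (B). -/
def SchemeB (lam M0 τ N : ℝ) (u0 : Torus → ℂ) (un : ℕ → Torus → ℂ) : Prop :=
  un 0 = u0 ∧ ∀ n : ℕ, un (n + 1) =
    linProp (τ / 2) (Ntilde lam τ N (linProp (τ / 2)
      (fun x => PiLe N (un n) x + Complex.exp (-(2 * π * M0 * τ) * Complex.I * lam) * PiGt N (un n) x)))

section Aux
open Complex MeasureTheory

local notation "μH" => (AddCircle.haarAddCircle : Measure Torus)

lemma norm_fourier' (n : ℤ) (x : Torus) : ‖(fourier n x : ℂ)‖ = 1 := Circle.norm_coe _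

def coeffSet (N : ℝ) : Finset ℤ := Finset.Icc (-⌊N⌋) ⌊N⌋

lemma mem_coeffSet_iff {N : ℝ} {k : ℤ} : k ∈ coeffSet N ↔ (|k| : ℝ) ≤ N := by
  rw [coeffSet, Finset.mem_Icc, ← abs_le, ← Int.cast_abs, Int.le_floor]

lemma PiLe_eq_sum (N : ℝ) (f : Torus → ℂ) (x : Torus) :
    PiLe N f x = ∑ k ∈ coeffSet N, fourierCoeff f k * fourier k x := by
  rw [PiLe, mult, tsum_eq_sum (s := coeffSet N)
    (fun k hk => by rw [if_neg (fun h => hk (mem_coeffSet_iff.mpr h)), zero_mul, zero_mul])]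
  exact Finset.sum_congr rfl fun k hk => by rw [if_pos (mem_coeffSet_iff.mp hk), one_mul]

lemma continuous_PiLe (N : ℝ) (f : Torus → ℂ) : Continuous (PiLe N f) := by
  have h : PiLe N f = fun x => ∑ k ∈ coeffSet N, fourierCoeff f k * fourier k x :=
    funext (PiLe_eq_sum N f)
  rw [h]
  exact continuous_finset_sum _ fun k _ => continuous_const.mul (fourier k).continuous

lemma cont_memLp {f : Torus → ℂ} (hf : Continuous f) : MemLp f 2 volume :=
  MemLp.of_bound hf.aestronglyMeasurable ‖BoundedContinuousFunction.mkOfCompact ⟨f, hf⟩‖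
    (Filter.Eventually.of_forall fun x =>
      BoundedContinuousFunction.norm_coe_le_norm (BoundedContinuousFunction.mkOfCompact ⟨f, hf⟩) x)

lemma fourierCoeff_eq (f : Torus → ℂ) (n : ℤ) :
    fourierCoeff f n = ∫ t : Torus, fourier (-n) t * f t ∂μH := rfl

lemma memLp_haar {f : Torus → ℂ} (hf : MemLp f 2 volume) : MemLp f 2 μH := by
  have hvol : (volume : Measure Torus) = ENNReal.ofReal (2*π) • μH :=
    AddCircle.volume_eq_smul_haarAddCircle
  have hc0 : (0:ℝ≥0∞) < ENNReal.ofReal (2*π) := ENNReal.ofReal_pos.mpr (by positivity)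
  have hac : μH ≪ (volume : Measure Torus) := by
    refine Measure.AbsolutelyContinuous.mk fun s _ hs => ?_
    rw [hvol, Measure.smul_apply, smul_eq_mul] at hs
    exact (mul_eq_zero.mp hs).resolve_left hc0.ne'
  refine ⟨hf.1.mono_ac hac, ?_⟩
  have h2 := hf.2
  rw [hvol, eLpNorm_smul_measure_of_ne_zero hc0.ne'] at h2
  rw [lt_top_iff_ne_top]
  intro h
  rw [h, smul_eq_mul, ENNReal.mul_top] at h2
  · exact absurd h2 (lt_irrefl _)
  · exact (ENNReal.rpow_pos hc0 ENNReal.ofReal_ne_top).ne'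

lemma integrable_of_memLp {f : Torus → ℂ} (hf : MemLp f 2 volume) : Integrable f μH :=
  memLp_one_iff_integrable.mp ((memLp_haar hf).mono_exponent one_le_two)

end Aux
section Aux2
open Complex MeasureTheory

local notation "μH" => (AddCircle.haarAddCircle : Measure Torus)

lemma cont_integrable {f : Torus → ℂ} (hf : Continuous f) : Integrable f μH :=
  integrable_of_memLp (cont_memLp hf)

lemma integrable_fourier_mul {f : Torus → ℂ} (hf : Integrable f μH) (n : ℤ) :
    Integrable (fun t => fourier n t * f t) μH :=
  hf.bdd_mul (c := 1) (fourier n).continuous.aestronglyMeasurable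
    (Filter.Eventually.of_forall fun x => le_of_eq (norm_fourier' n x))

lemma fourierCoeff_fourier'' (j n : ℤ) :
    fourierCoeff (⇑(fourier j) : Torus → ℂ) n = if n = j then 1 else 0 := by
  have h := orthonormal_iff_ite.mp (orthonormal_fourier (T := 2*π)) n j
  rw [ContinuousMap.inner_toLp] at h
  rw [fourierCoeff_eq, ← h]
  refine integral_congr_ae (Filter.Eventually.of_forall fun x => ?_)
  simp only [fourier_neg]
  ring

lemma fourierCoeff_finsum (s : Finset ℤ) (a : ℤ → ℂ) (n : ℤ) :
    fourierCoeff (fun x : Torus => ∑ k ∈ s, a k * fourier k x) n = if n ∈ s then a n else 0 := by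
  rw [fourierCoeff_eq]
  have h1 : ∀ t : Torus, fourier (-n) t * (∑ k ∈ s, a k * fourier k t)
      = ∑ k ∈ s, a k * (fourier (-n) t * fourier k t) := by
    intro t; rw [Finset.mul_sum]; exact Finset.sum_congr rfl fun k _ => by ring
  simp_rw [h1]
  rw [integral_finset_sum (f := fun k t => a k * (fourier (-n) t * fourier k t)) _
    (fun k _ => (cont_integrable ((fourier (-n)).continuous.mul
    (fourier k).continuous)).const_mul (a k))]
  have h2 : ∀ k ∈ s, ∫ t : Torus, a k * (fourier (-n) t * fourier k t) ∂μH
      = if n = k then a k else 0 := by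
    intro k _
    rw [integral_const_mul, ← fourierCoeff_eq, fourierCoeff_fourier'']
    split_ifs <;> simp
  rw [Finset.sum_congr rfl h2, Finset.sum_ite_eq s n a]

lemma fourierCoeff_PiLe (N : ℝ) (f : Torus → ℂ) (n : ℤ) :
    fourierCoeff (PiLe N f) n = if (|n| : ℝ) ≤ N then fourierCoeff f n else 0 := by
  have h : PiLe N f = fun x => ∑ k ∈ coeffSet N, fourierCoeff f k * fourier k x :=
    funext (PiLe_eq_sum N f)
  rw [h, fourierCoeff_finsum]
  by_cases hn : (|n| : ℝ) ≤ N
  · rw [if_pos (mem_coeffSet_iff.mpr hn), if_pos hn]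
  · rw [if_neg (fun hm => hn (mem_coeffSet_iff.mp hm)), if_neg hn]

lemma fourierCoeff_add' {f g : Torus → ℂ} (hf : Integrable f μH) (hg : Integrable g μH) (n : ℤ) :
    fourierCoeff (fun x => f x + g x) n = fourierCoeff f n + fourierCoeff g n := by
  simp_rw [fourierCoeff_eq, mul_add]
  exact integral_add (integrable_fourier_mul hf (-n)) (integrable_fourier_mul hg (-n))

lemma fourierCoeff_sub' {f g : Torus → ℂ} (hf : Integrable f μH) (hg : Integrable g μH) (n : ℤ) :
    fourierCoeff (fun x => f x - g x) n = fourierCoeff f n - fourierCoeff g n := by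
  simp_rw [fourierCoeff_eq, mul_sub]
  exact integral_sub (integrable_fourier_mul hf (-n)) (integrable_fourier_mul hg (-n))

lemma fourierCoeff_zero' (n : ℤ) : fourierCoeff (fun _ : Torus => (0:ℂ)) n = 0 := by
  simp [fourierCoeff_eq]

lemma parseval {f : Torus → ℂ} (hf : MemLp f 2 volume) :
    Summable (fun k : ℤ => ‖fourierCoeff f k‖^2) ∧
      ∑' k : ℤ, ‖fourierCoeff f k‖^2 = ∫ x : Torus, ‖f x‖^2 ∂μH := by
  have hf' : MemLp f 2 μH := memLp_haar hf
  set fL := hf'.toLp f with hfL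
  have hae : ⇑fL =ᵐ[μH] f := hf'.coeFn_toLp
  have hcoeff : ∀ n : ℤ, fourierCoeff (⇑fL : Torus → ℂ) n = fourierCoeff f n := by
    intro n
    refine integral_congr_ae (hae.mono fun x hx => ?_)
    dsimp only
    rw [hx]
  constructor
  · have hmem := lp.memℓp (fourierBasis.repr fL)
    have hsum := (memℓp_gen_iff (p := 2) (by norm_num)).mp hmem
    have he : ∀ x : ℝ, x ^ ((2:ℝ≥0∞).toReal) = x ^ 2 := fun x => by
      rw [show ((2:ℝ≥0∞).toReal) = ((2:ℕ):ℝ) by norm_num, Real.rpow_natCast]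
    simp_rw [he, fourierBasis_repr, hcoeff] at hsum
    exact hsum
  · have hp := tsum_sq_fourierCoeff fL
    simp_rw [hcoeff] at hp
    rw [hp]
    exact integral_congr_ae (hae.mono fun x hx => by dsimp only; rw [hx])

end Aux2
section Aux3
open Complex MeasureTheory

local notation "μH" => (AddCircle.haarAddCircle : Measure Torus)

lemma norm_exp_I_sq (t : ℝ) (k : ℤ) : ‖Complex.exp (Complex.I * t * (k:ℂ)^2)‖ = 1 := by
  rw [Complex.norm_exp]
  have hk : ((k:ℂ)^2).im = 0 := by
    rw [show ((k:ℂ)^2) = (((k^2 : ℤ)):ℂ) by push_cast; ring]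
    exact Complex.intCast_im _
  norm_num [Complex.mul_re, Complex.mul_im, hk]

lemma norm_linProp_term (t : ℝ) (f : Torus → ℂ) (k : ℤ) (x : Torus) :
    ‖Complex.exp (Complex.I * t * (k:ℂ)^2) * fourierCoeff f k * fourier k x‖
      = ‖fourierCoeff f k‖ := by
  rw [norm_mul, norm_mul, norm_exp_I_sq, norm_fourier', one_mul, mul_one]

lemma linProp_of_not_summable {f : Torus → ℂ} (t : ℝ)
    (h : ¬ Summable fun k : ℤ => ‖fourierCoeff f k‖) : linProp t f = fun _ => 0 := by
  funext x
  rw [linProp, mult]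
  apply tsum_eq_zero_of_not_summable
  intro hs
  apply h
  have h2 := hs.norm
  simpa only [norm_linProp_term] using h2

lemma linProp_continuous {f : Torus → ℂ} (t : ℝ)
    (h : Summable fun k : ℤ => ‖fourierCoeff f k‖) : Continuous (linProp t f) := by
  have hrw : linProp t f = fun x : Torus =>
      ∑' k : ℤ, Complex.exp (Complex.I * t * (k:ℂ)^2) * fourierCoeff f k * fourier k x := rfl
  rw [hrw]
  exact continuous_tsum
    (fun k => (continuous_const.mul (fourier k).continuous))
    h (fun k x => le_of_eq (norm_linProp_term t f k x))

lemma linProp_coeff {f : Torus → ℂ} (t : ℝ)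
    (h : Summable fun k : ℤ => ‖fourierCoeff f k‖) (n : ℤ) :
    fourierCoeff (linProp t f) n
      = Complex.exp (Complex.I * t * (n:ℂ)^2) * fourierCoeff f n := by
  set c : ℤ → ℂ := fun k => Complex.exp (Complex.I * t * (k:ℂ)^2) * fourierCoeff f k with hc
  have hnc : ∀ k, ‖c k‖ = ‖fourierCoeff f k‖ := fun k => by
    rw [hc]; rw [norm_mul, norm_exp_I_sq, one_mul]
  have hsum : Summable fun k => ‖c k‖ := by simpa only [hnc] using h
  rw [fourierCoeff_eq]
  have h1 : ∀ x : Torus, fourier (-n) x * linProp t f x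
      = ∑' k : ℤ, c k * (fourier (-n) x * fourier k x) := by
    intro x
    rw [linProp, mult, ← tsum_mul_left]
    exact tsum_congr fun k => by ring
  simp_rw [h1]
  rw [integral_tsum]
  · have h2 : ∀ k : ℤ, ∫ x : Torus, c k * (fourier (-n) x * fourier k x) ∂μH
        = if n = k then c k else 0 := by
      intro k
      rw [integral_const_mul, ← fourierCoeff_eq, fourierCoeff_fourier'']
      split_ifs <;> simp
    simp_rw [h2]
    rw [tsum_eq_single n (fun k hk => by rw [if_neg (Ne.symm hk)]), if_pos rfl]
  · exact fun k => ((continuous_const.mul ((fourier (-n)).continuous.mul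
      (fourier k).continuous))).aestronglyMeasurable
  · have hval : ∀ k : ℤ, ∫⁻ x : Torus, ‖c k * (fourier (-n) x * fourier k x)‖ₑ ∂μH
        = (‖c k‖₊ : ℝ≥0∞) := by
      intro k
      have : ∀ x : Torus, ‖c k * (fourier (-n) x * fourier k x)‖ₑ
          = (‖c k‖₊ : ℝ≥0∞) := by
        intro x
        have hn : ‖c k * (fourier (-n) x * fourier k x)‖ = ‖c k‖ := by
          rw [norm_mul (c k), norm_mul ((fourier (-n)) x), norm_fourier', norm_fourier', mul_one, mul_one]
        rw [← ofReal_norm, hn]; exact ofReal_norm _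
      simp_rw [this]
      rw [lintegral_const, measure_univ, mul_one]
    simp_rw [hval]
    rw [ENNReal.tsum_coe_ne_top_iff_summable]
    exact NNReal.summable_coe.mp (by simpa only [coe_nnnorm] using hsum)

lemma PiLe_zero_fun (N : ℝ) (x : Torus) : PiLe N (fun _ : Torus => (0:ℂ)) x = 0 := by
  rw [PiLe_eq_sum]
  simp [fourierCoeff_zero']

end Aux3
section Aux4
open Complex MeasureTheory

local notation "μH" => (AddCircle.haarAddCircle : Measure Torus)

lemma norm_Nflow (lam t : ℝ) (φ : Torus → ℂ) (x : Torus) :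
    ‖Nflow lam t φ x‖ = ‖φ x‖ := by
  rw [Nflow, norm_mul, Complex.norm_exp]
  norm_num [Complex.mul_re, Complex.mul_im, ← Complex.ofReal_pow]

lemma continuous_Nflow (lam t : ℝ) {φ : Torus → ℂ} (hφ : Continuous φ) :
    Continuous (Nflow lam t φ) := by
  have hrw : Nflow lam t φ = fun x =>
      Complex.exp (-Complex.I * lam * t * ((‖φ x‖ ^ 2 : ℝ) : ℂ)) * φ x := rfl
  rw [hrw]
  refine Continuous.mul ?_ hφ
  refine Complex.continuous_exp.comp ?_
  exact continuous_const.mul (Complex.continuous_ofReal.comp ((hφ.norm).pow 2))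

lemma eLpNorm_le_of_integral_le {f g : Torus → ℂ} (hf : MemLp f 2 volume)
    (hg : MemLp g 2 volume)
    (h : ∫ x : Torus, ‖f x‖^2 ∂μH ≤ ∫ x : Torus, ‖g x‖^2 ∂μH) :
    eLpNorm f 2 volume ≤ eLpNorm g 2 volume := by
  rw [hf.eLpNorm_eq_integral_rpow_norm two_ne_zero ENNReal.ofNat_ne_top,
      hg.eLpNorm_eq_integral_rpow_norm two_ne_zero ENNReal.ofNat_ne_top]
  apply ENNReal.ofReal_le_ofReal
  have he : ∀ x : ℝ, x ^ ((2:ℝ≥0∞).toReal) = x ^ 2 := fun x => by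
    rw [show ((2:ℝ≥0∞).toReal) = ((2:ℕ):ℝ) by norm_num, Real.rpow_natCast]
  have hint : ∀ q : Torus → ℂ, ∫ x : Torus, ‖q x‖ ^ ((2:ℝ≥0∞).toReal) ∂(volume : Measure Torus)
      = (2*π) * ∫ x : Torus, ‖q x‖^2 ∂μH := by
    intro q
    simp_rw [he]
    rw [AddCircle.volume_eq_smul_haarAddCircle, integral_smul_measure,
      ENNReal.toReal_ofReal (by positivity), smul_eq_mul]
  rw [hint, hint]
  apply Real.rpow_le_rpow (by positivity)
  · exact mul_le_mul_of_nonneg_left h (by positivity)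
  · norm_num

lemma mass_step {N1 : ℝ} {f F u' : Torus → ℂ} (b : ℤ → ℂ)
    (hf : MemLp f 2 volume) (hu' : MemLp u' 2 volume)
    (hcoeff : ∀ k : ℤ, fourierCoeff u' k
      = if (|k| : ℝ) ≤ N1 then fourierCoeff F k else b k)
    (hb : ∀ k : ℤ, ‖b k‖ ≤ ‖fourierCoeff f k‖)
    (hFs : Summable fun k : ℤ => ‖fourierCoeff F k‖^2)
    (hFsum : ∑' k : ℤ, ‖fourierCoeff F k‖^2 ≤ ∑ k ∈ coeffSet N1, ‖fourierCoeff f k‖^2) :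
    eLpNorm u' 2 volume ≤ eLpNorm f 2 volume := by
  obtain ⟨hsf, hpf⟩ := parseval hf
  obtain ⟨hsu, hpu⟩ := parseval hu'
  apply eLpNorm_le_of_integral_le hu' hf
  rw [← hpu, ← hpf]
  set A1 : ℤ → ℝ := fun k => if (|k| : ℝ) ≤ N1 then ‖fourierCoeff F k‖^2 else 0 with hA1
  set A2 : ℤ → ℝ := fun k => if (|k| : ℝ) ≤ N1 then 0 else ‖b k‖^2 with hA2
  set B1 : ℤ → ℝ := fun k => if (|k| : ℝ) ≤ N1 then ‖fourierCoeff f k‖^2 else 0 with hB1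
  set B2 : ℤ → ℝ := fun k => if (|k| : ℝ) ≤ N1 then 0 else ‖fourierCoeff f k‖^2 with hB2
  have hA1s : Summable A1 := summable_of_ne_finset_zero (s := coeffSet N1)
    (fun k hk => if_neg (fun h => hk (mem_coeffSet_iff.mpr h)))
  have hB1s : Summable B1 := summable_of_ne_finset_zero (s := coeffSet N1)
    (fun k hk => if_neg (fun h => hk (mem_coeffSet_iff.mpr h)))
  have hA2leB2 : ∀ k, A2 k ≤ B2 k := by
    intro k
    rw [hA2, hB2]
    by_cases h : (|k| : ℝ) ≤ N1
    · simp [h]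
    · simp only [h, if_false]
      exact pow_le_pow_left₀ (norm_nonneg _) (hb k) 2
  have hB2s : Summable B2 := by
    apply hsf.of_nonneg_of_le (fun k => ?_) (fun k => ?_)
    · rw [hB2]; positivity
    · rw [hB2]; by_cases h : (|k| : ℝ) ≤ N1 <;> simp [h]
  have hA2s : Summable A2 := hB2s.of_nonneg_of_le
    (fun k => by rw [hA2]; positivity) hA2leB2
  have hu_split : (fun k : ℤ => ‖fourierCoeff u' k‖^2) = fun k => A1 k + A2 k := by
    funext k
    rw [hcoeff k, hA1, hA2]
    by_cases h : (|k| : ℝ) ≤ N1 <;> simp [h]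
  have hf_split : (fun k : ℤ => ‖fourierCoeff f k‖^2) = fun k => B1 k + B2 k := by
    funext k
    rw [hB1, hB2]
    by_cases h : (|k| : ℝ) ≤ N1 <;> simp [h]
  rw [hu_split, hf_split, hA1s.tsum_add hA2s, hB1s.tsum_add hB2s]
  have h1 : ∑' k, A1 k ≤ ∑' k, B1 k := by
    rw [tsum_eq_sum (s := coeffSet N1)
        (fun k hk => if_neg (fun h => hk (mem_coeffSet_iff.mpr h))),
      tsum_eq_sum (s := coeffSet N1)
        (fun k hk => if_neg (fun h => hk (mem_coeffSet_iff.mpr h)))]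
    have e1 : ∑ k ∈ coeffSet N1, A1 k = ∑ k ∈ coeffSet N1, ‖fourierCoeff F k‖^2 :=
      Finset.sum_congr rfl fun k hk => if_pos (mem_coeffSet_iff.mp hk)
    have e2 : ∑ k ∈ coeffSet N1, B1 k = ∑ k ∈ coeffSet N1, ‖fourierCoeff f k‖^2 :=
      Finset.sum_congr rfl fun k hk => if_pos (mem_coeffSet_iff.mp hk)
    rw [e1, e2]
    calc ∑ k ∈ coeffSet N1, ‖fourierCoeff F k‖^2
        ≤ ∑' k : ℤ, ‖fourierCoeff F k‖^2 :=
          Summable.sum_le_tsum _ (fun k _ => by positivity) hFs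
      _ ≤ _ := hFsum
  have h2 : ∑' k, A2 k ≤ ∑' k, B2 k := Summable.tsum_le_tsum hA2leB2 hA2s hB2s
  exact add_le_add h1 h2

end Aux4
section Aux5
open Complex MeasureTheory

local notation "μH" => (AddCircle.haarAddCircle : Measure Torus)

lemma step_all (lam M0 τ N : ℝ) {f : Torus → ℂ} (hf : MemLp f 2 volume) :
    MemLp (fun x =>
      PiGt N (linProp τ (fun y => Complex.exp (-(4 * π * M0 * τ) * Complex.I * lam) * f y)) x
        + PiLe N (linProp (τ / 2) (Nflow lam τ (linProp (τ / 2) (PiLe N f)))) x) 2 volume ∧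
    eLpNorm (fun x =>
      PiGt N (linProp τ (fun y => Complex.exp (-(4 * π * M0 * τ) * Complex.I * lam) * f y)) x
        + PiLe N (linProp (τ / 2) (Nflow lam τ (linProp (τ / 2) (PiLe N f)))) x) 2 volume
      ≤ eLpNorm f 2 volume := by
  set c : ℂ := Complex.exp (-(4 * π * M0 * τ) * Complex.I * lam) with hcdef
  set g : Torus → ℂ := fun y => c * f y with hgdef
  have hcnorm : ‖c‖ = 1 := by
    rw [hcdef, Complex.norm_exp]
    norm_num [Complex.mul_re, Complex.mul_im]
  have hgc : ∀ k : ℤ, fourierCoeff g k = c * fourierCoeff f k := fun k =>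
    fourierCoeff.const_mul f c k
  have hgnorm : ∀ k : ℤ, ‖fourierCoeff g k‖ = ‖fourierCoeff f k‖ := fun k => by
    rw [hgc, norm_mul, hcnorm, one_mul]
  -- the low-frequency nonlinear part
  have hPc := fourierCoeff_PiLe N f
  have hPs : Summable fun k : ℤ => ‖fourierCoeff (PiLe N f) k‖ :=
    summable_of_ne_finset_zero (s := coeffSet N) fun k hk => by
      rw [hPc, if_neg (fun h => hk (mem_coeffSet_iff.mpr h)), norm_zero]
  set ψ : Torus → ℂ := linProp (τ / 2) (PiLe N f) with hψdef
  have hψcont : Continuous ψ := linProp_continuous (τ / 2) hPs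
  have hψc := linProp_coeff (τ / 2) hPs
  set w : Torus → ℂ := Nflow lam τ ψ with hwdef
  have hwcont : Continuous w := continuous_Nflow lam τ hψcont
  obtain ⟨hsw, hpw⟩ := parseval (cont_memLp hwcont)
  obtain ⟨hsψ, hpψ⟩ := parseval (cont_memLp hψcont)
  have hwψ : ∫ x : Torus, ‖w x‖^2 ∂μH = ∫ x : Torus, ‖ψ x‖^2 ∂μH :=
    integral_congr_ae (Filter.Eventually.of_forall fun x => by simp only [hwdef, norm_Nflow])
  have hψsum : ∑' k : ℤ, ‖fourierCoeff ψ k‖^2 = ∑ k ∈ coeffSet N, ‖fourierCoeff f k‖^2 := by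
    rw [tsum_eq_sum (s := coeffSet N) (fun k hk => by
      rw [hψc, hPc, if_neg (fun h => hk (mem_coeffSet_iff.mpr h)), mul_zero, norm_zero]
      norm_num)]
    refine Finset.sum_congr rfl fun k hk => ?_
    rw [hψc, hPc, if_pos (mem_coeffSet_iff.mp hk), norm_mul, norm_exp_I_sq, one_mul]
  have hwsum : ∑' k : ℤ, ‖fourierCoeff w k‖^2 = ∑ k ∈ coeffSet N, ‖fourierCoeff f k‖^2 := by
    rw [hpw, hwψ, ← hpψ, hψsum]
  set F : Torus → ℂ := linProp (τ / 2) w with hFdef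
  have hF : MemLp F 2 volume ∧ (Summable fun k : ℤ => ‖fourierCoeff F k‖^2) ∧
      ∑' k : ℤ, ‖fourierCoeff F k‖^2 ≤ ∑ k ∈ coeffSet N, ‖fourierCoeff f k‖^2 := by
    by_cases hw1 : Summable fun k : ℤ => ‖fourierCoeff w k‖
    · have hFcont : Continuous F := linProp_continuous (τ / 2) hw1
      have hFc := linProp_coeff (τ / 2) hw1
      have hFn : ∀ k : ℤ, ‖fourierCoeff F k‖ = ‖fourierCoeff w k‖ := fun k => by
        rw [hFc, norm_mul, norm_exp_I_sq, one_mul]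
      refine ⟨cont_memLp hFcont, ?_, ?_⟩
      · exact (summable_congr fun k => by rw [hFn]).mpr hsw
      · rw [tsum_congr fun k => by rw [hFn], hwsum]
    · have hF0 : F = fun _ => 0 := linProp_of_not_summable (τ / 2) hw1
      have hFc0 : ∀ k : ℤ, fourierCoeff F k = 0 := fun k => by
        rw [hF0]; exact fourierCoeff_zero' k
      refine ⟨by rw [hF0]; exact memLp_const 0, ?_, ?_⟩
      · exact (summable_congr fun k => by rw [hFc0, norm_zero]; norm_num).mpr summable_zero
      · have hz : ∑' k : ℤ, ‖fourierCoeff F k‖^2 = 0 := by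
          simp [hFc0]
        rw [hz]
        exact Finset.sum_nonneg fun k _ => by positivity
  have hLFcont : Continuous (PiLe N F) := continuous_PiLe N F
  have hLFc := fourierCoeff_PiLe N F
  by_cases hg1 : Summable fun k : ℤ => ‖fourierCoeff g k‖
  · -- high frequencies survive
    set A : Torus → ℂ := linProp τ g with hAdef
    have hAcont : Continuous A := linProp_continuous τ hg1
    have hAc := linProp_coeff τ hg1
    have hPiAcont : Continuous (PiLe N A) := continuous_PiLe N A
    have hrw : (fun x => PiGt N A x + PiLe N F x)
        = fun x => (A x - PiLe N A x) + PiLe N F x := rfl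
    have hu'cont : Continuous fun x => PiGt N A x + PiLe N F x := by
      rw [hrw]; exact (hAcont.sub hPiAcont).add hLFcont
    have hu'mem : MemLp (fun x => PiGt N A x + PiLe N F x) 2 volume := cont_memLp hu'cont
    have hcoeff : ∀ k : ℤ, fourierCoeff (fun x => PiGt N A x + PiLe N F x) k
        = if (|k| : ℝ) ≤ N then fourierCoeff F k else fourierCoeff A k := by
      intro k
      have hiA : Integrable (fun x => A x - PiLe N A x) μH :=
        (cont_integrable hAcont).sub (cont_integrable hPiAcont)
      have hiL : Integrable (fun x => PiLe N F x) μH := cont_integrable hLFcont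
      rw [hrw, fourierCoeff_add' (f := fun x => A x - PiLe N A x)
          (g := fun x => PiLe N F x) hiA hiL k,
        fourierCoeff_sub' (f := fun x => A x) (g := fun x => PiLe N A x)
          (cont_integrable hAcont) (cont_integrable hPiAcont) k,
        fourierCoeff_PiLe, hLFc]
      by_cases h : (|k| : ℝ) ≤ N <;> simp [h]
    have hb : ∀ k : ℤ, ‖fourierCoeff A k‖ ≤ ‖fourierCoeff f k‖ := fun k => by
      rw [hAc, norm_mul, norm_exp_I_sq, one_mul, hgnorm]
    exact ⟨hu'mem, mass_step _ hf hu'mem hcoeff hb hF.2.1 hF.2.2⟩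
  · -- high frequencies vanish
    have hA0 : linProp τ g = fun _ => 0 := linProp_of_not_summable τ hg1
    have hrw : (fun x => PiGt N (linProp τ g) x + PiLe N F x) = fun x => PiLe N F x := by
      funext x
      show (linProp τ g x - PiLe N (linProp τ g) x) + PiLe N F x = PiLe N F x
      rw [hA0, PiLe_zero_fun]
      simp
    have hu'mem : MemLp (fun x => PiGt N (linProp τ g) x + PiLe N F x) 2 volume := by
      rw [hrw]; exact cont_memLp hLFcont
    have hcoeff : ∀ k : ℤ, fourierCoeff (fun x => PiGt N (linProp τ g) x + PiLe N F x) k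
        = if (|k| : ℝ) ≤ N then fourierCoeff F k else (fun _ : ℤ => (0:ℂ)) k := by
      intro k
      rw [hrw]
      have : (fun x => PiLe N F x) = PiLe N F := rfl
      rw [this, hLFc]
    have hb : ∀ k : ℤ, ‖(fun _ : ℤ => (0:ℂ)) k‖ ≤ ‖fourierCoeff f k‖ := fun k => by
      simp
    exact ⟨hu'mem, mass_step _ hf hu'mem hcoeff hb hF.2.1 hF.2.2⟩

end Aux5

theorem schemeA_mass_nonincreasing
    (lam M0 τ N : ℝ) (hτ : 0 < τ) (hN : 1 ≤ N)
    (u0 : Torus → ℂ) (hu0 : MemLp u0 2 volume)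
    (un : ℕ → Torus → ℂ) (hscheme : SchemeA lam M0 τ N u0 un) :
    (∀ n : ℕ, eLpNorm (un (n + 1)) 2 volume ≤ eLpNorm (un n) 2 volume) ∧
      ∀ n : ℕ, eLpNorm (un n) 2 volume ≤ eLpNorm u0 2 volume := by
  obtain ⟨h0, hrec⟩ := hscheme
  have hmem : ∀ n : ℕ, MemLp (un n) 2 volume := by
    intro n
    induction n with
    | zero => rw [h0]; exact hu0
    | succ n ih =>
      rw [hrec n]
      exact (step_all lam M0 τ N ih).1
  have hdec : ∀ n : ℕ, eLpNorm (un (n + 1)) 2 volume ≤ eLpNorm (un n) 2 volume := by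
    intro n
    rw [hrec n]
    exact (step_all lam M0 τ N (hmem n)).2
  refine ⟨hdec, ?_⟩
  intro n
  induction n with
  | zero => rw [h0]
  | succ n ih => exact le_trans (hdec n) ih
end
end

section
/- For every p∈(1,∞) there exists C=C(p)>0 such that for all s>0 and N≥1 with sN²≤1, and all f∈L^p(𝕋) whose Fourier coefficients vanish for |k|>N, the Fourier multiplier with symbol e^{−isk²}−1+isk² satisfies ‖Σ_{|k|≤N}(e^{−isk²}−1+isk²)f̂_k e^{ikx}‖_{L^p(𝕋)} ≤ C s² ‖J⁴f‖_{L^p(𝕋)}. -/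
open MeasureTheory Real Set Filter
open scoped ENNReal

noncomputable section

/-- `J^s`, the Fourier multiplier with symbol `(1+k²)^{s/2}`. -/
def Jop (s : ℝ) : (Torus → ℂ) → (Torus → ℂ) :=
  mult (fun k => (((1 + (k : ℝ) ^ 2) ^ (s / 2) : ℝ) : ℂ))

namespace MultAux

open Finset Complex

/-- The trigonometric polynomial with coefficients `c` on `[-M, M]`. -/
def P (M : ℕ) (c : ℤ → ℂ) : Torus → ℂ :=
  fun x => ∑ k ∈ Finset.Icc (-(M:ℤ)) M, c k * fourier k x

lemma contP (M : ℕ) (c : ℤ → ℂ) : Continuous (P M c) := by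
  refine continuous_finset_sum _ fun k _ => ?_
  exact continuous_const.mul (fourier k).continuous

lemma norm_fourier (n : ℤ) (x : Torus) : ‖fourier n x‖ = 1 := by
  simp [fourier_apply, Circle.norm_coe]

lemma normP_le (M : ℕ) (c : ℤ → ℂ) (x : Torus) :
    ‖P M c x‖ ≤ ∑ k ∈ Finset.Icc (-(M:ℤ)) M, ‖c k‖ := by
  refine (norm_sum_le _ _).trans (Finset.sum_le_sum fun k _ => ?_)
  rw [norm_mul, norm_fourier, mul_one]

lemma memP (M : ℕ) (c : ℤ → ℂ) (p : ℝ≥0∞) : MemLp (P M c) p volume := by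
  have h := (contP M c)
  refine ⟨h.aestronglyMeasurable, ?_⟩
  refine lt_of_le_of_lt (eLpNorm_le_of_ae_bound (C := ∑ k ∈ Finset.Icc (-(M:ℤ)) M, ‖c k‖)
    (Filter.Eventually.of_forall (normP_le M c))) ?_
  exact ENNReal.mul_lt_top (ENNReal.rpow_lt_top_of_nonneg (by positivity)
    (by simp [AddCircle.measure_univ, ENNReal.mul_eq_top]) ) ENNReal.ofReal_lt_top

lemma integrable_torus {g : Torus → ℂ} (hg : Continuous g) (μ : Measure Torus)
    [IsFiniteMeasureOnCompacts μ] : Integrable g μ :=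
  hg.integrable_of_hasCompactSupport (HasCompactSupport.of_compactSpace g)

/-- Mean of a character against normalized Haar. -/
lemma integral_fourier_haar (r : ℤ) :
    (∫ t : Torus, fourier r t ∂AddCircle.haarAddCircle) = if r = 0 then 1 else 0 := by
  split_ifs with h
  · subst h
    have : (fun t : Torus => fourier 0 t) = fun _ => (1 : ℂ) := by
      ext t; exact fourier_zero
    rw [this, integral_const, Measure.real, measure_univ, ENNReal.toReal_one, one_smul]
  · exact integral_eq_zero_of_add_right_eq_neg (μ := AddCircle.haarAddCircle)
      (fourier_add_half_inv_index h (by positivity))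

lemma fourierCoeff_fourier (m k : ℤ) :
    fourierCoeff (T := 2*π) (fourier m) k = if k = m then 1 else 0 := by
  unfold fourierCoeff
  have : (fun t : Torus => fourier (-k) t • fourier m t)
      = fun t : Torus => fourier (-k + m) t := by
    ext t; rw [fourier_add]; rfl
  rw [this, integral_fourier_haar]
  congr 1
  simp only [eq_iff_iff]
  omega

lemma fourierCoeff_P (M : ℕ) (c : ℤ → ℂ) (k : ℤ) :
    fourierCoeff (P M c) k = if k ∈ Finset.Icc (-(M:ℤ)) M then c k else 0 := by
  unfold fourierCoeff P
  have hsmul : (fun t : Torus => fourier (-k) t • ∑ j ∈ Finset.Icc (-(M:ℤ)) M, c j * fourier j t)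
      = fun t : Torus => ∑ j ∈ Finset.Icc (-(M:ℤ)) M, fourier (-k) t • (c j * fourier j t) := by
    ext t; rw [Finset.smul_sum]
  rw [hsmul, integral_finset_sum]
  · have : ∀ j ∈ Finset.Icc (-(M:ℤ)) M,
        (∫ t : Torus, fourier (-k) t • (c j * fourier j t) ∂AddCircle.haarAddCircle)
        = c j * if k = j then 1 else 0 := by
      intro j _
      have : (fun t : Torus => fourier (-k) t • (c j * fourier j t))
          = fun t : Torus => c j • (fourier (-k + j) t) := by
        ext t
        rw [fourier_add, smul_eq_mul, smul_eq_mul]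
        ring
      rw [this, integral_smul, integral_fourier_haar, smul_eq_mul,
        if_congr (by omega : (-k + j = 0) ↔ (k = j)) rfl rfl]
    rw [Finset.sum_congr rfl this]
    split_ifs with h
    · rw [Finset.sum_eq_single k]
      · simp
      · intro j _ hj; simp [Ne.symm hj]
      · intro hk; exact absurd h hk
    · refine Finset.sum_eq_zero fun j hj => ?_
      have : k ≠ j := fun hkj => h (hkj ▸ hj)
      simp [this]
  · intro j _
    refine integrable_torus ?_ _
    exact ((fourier (-k)).continuous).smul (continuous_const.mul (fourier j).continuous)

/-- Quadrature points. -/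
def pt (m : ℕ) (j : ℕ) : Torus := ((2 * π * j / m : ℝ) : Torus)

lemma fourier_pt (m : ℕ) (hm : 0 < m) (r : ℤ) (j : ℕ) :
    fourier r (pt m j) = Complex.exp (2 * π * Complex.I * r / m) ^ j := by
  rw [pt, fourier_coe_apply, ← Complex.exp_nat_mul]
  congr 1
  have hm' : (m : ℂ) ≠ 0 := Nat.cast_ne_zero.mpr hm.ne'
  have hpi : (π : ℂ) ≠ 0 := Complex.ofReal_ne_zero.mpr Real.pi_ne_zero
  push_cast
  field_simp

lemma sum_fourier_pt (m : ℕ) (hm : 0 < m) (r : ℤ) (hr : |r| < m) :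
    ∑ j ∈ Finset.range m, fourier r (pt m j) = if r = 0 then (m : ℂ) else 0 := by
  have hm' : (m : ℂ) ≠ 0 := Nat.cast_ne_zero.mpr hm.ne'
  simp only [fourier_pt m hm r]
  set z : ℂ := Complex.exp (2 * π * Complex.I * r / m) with hz
  split_ifs with h
  · subst h
    simp [hz]
  · have hzm : z ^ m = 1 := by
      rw [hz, ← Complex.exp_nat_mul]
      have : (m : ℂ) * (2 * π * Complex.I * r / m) = r * (2 * π * Complex.I) := by
        field_simp
      rw [this, Complex.exp_int_mul_two_pi_mul_I]
    have hz1 : z ≠ 1 := by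
      intro hc
      rw [hz, Complex.exp_eq_one_iff] at hc
      obtain ⟨l, hl⟩ := hc
      have h2 : (2 * π * Complex.I) ≠ 0 := by
        simp [Real.pi_ne_zero, Complex.I_ne_zero, Complex.ofReal_ne_zero]
      have hrc : (r : ℂ) = l * m := by
        field_simp at hl
        have h3 : 2 * ↑π * Complex.I * (r:ℂ) = 2 * ↑π * Complex.I * ((l:ℂ) * m) := by
          rw [hl]; ring
        exact mul_left_cancel₀ h2 h3
      have hri : r = l * m := by exact_mod_cast hrc
      rcases eq_or_ne l 0 with h0 | h0
      · rw [h0, zero_mul] at hri; exact h hri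
      · have : (m : ℤ) ≤ |r| := by
          rw [hri, abs_mul]
          calc (m:ℤ) = 1 * |(m:ℤ)| := by simp
          _ ≤ |l| * |(m:ℤ)| := by
            have : (1:ℤ) ≤ |l| := Int.one_le_abs h0
            exact mul_le_mul_of_nonneg_right this (abs_nonneg _)
        omega
    rw [geom_sum_eq hz1, hzm]
    simp

/-- number of pairs `(a,b) ∈ [0,n)²` with `a - b = d`. -/
def cnt (n : ℕ) (d : ℤ) : ℕ :=
  ((Finset.range n ×ˢ Finset.range n).filter fun ab => (ab.1 : ℤ) - (ab.2 : ℤ) = d).card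

lemma cnt_eq (n : ℕ) (d : ℤ) : cnt n d = ((n : ℤ) - d.natAbs).toNat := by
  have hcard : cnt n d = (Finset.Ico (max 0 d) (min (n:ℤ) ((n:ℤ) + d))).card := by
    apply Finset.card_nbij' (i := fun ab => (ab.1 : ℤ))
      (j := fun x => (x.toNat, (x - d).toNat))
    · intro ab hab
      simp only [cnt, Finset.mem_coe, Finset.mem_filter, Finset.mem_product, Finset.mem_range] at hab
      simp only [Finset.mem_coe, Finset.mem_Ico, max_le_iff, lt_min_iff]
      omega
    · intro x hx
      simp only [Finset.mem_coe, Finset.mem_Ico, max_le_iff, lt_min_iff] at hx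
      simp only [Finset.mem_coe, Finset.mem_filter, Finset.mem_product, Finset.mem_range]
      omega
    · intro ab hab
      simp only [Finset.mem_coe, Finset.mem_filter, Finset.mem_product, Finset.mem_range] at hab
      ext <;> simp <;> omega
    · intro x hx
      simp only [Finset.mem_coe, Finset.mem_Ico, max_le_iff, lt_min_iff] at hx
      simp only []
      omega
  rw [hcard, Int.card_Ico]
  rcases le_or_gt 0 d with h | h
  · rw [max_eq_right h, min_eq_left (by omega)]
    omega
  · rw [max_eq_left h.le, min_eq_right (by omega)]
    omega

lemma cnt_combo (n : ℕ) (k : ℤ) (hk : k.natAbs ≤ n) :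
    (cnt n (k - n) : ℤ) - (cnt n (k + n) : ℤ) = k := by
  rw [cnt_eq, cnt_eq]
  omega

-- new material
lemma fourier_mul_fourier (r₁ r₂ : ℤ) (t : Torus) :
    fourier r₁ t * fourier r₂ t = fourier (r₁ + r₂) t := (fourier_add).symm

lemma key4 (u v w z : ℤ) (t : Torus) :
    fourier (u + v - w - z) t = fourier u t * fourier v t * fourier (-w) t * fourier (-z) t := by
  have h1 : u + v - w - z = u + (v + (-w + -z)) := by ring
  rw [h1, fourier_add, fourier_add, fourier_add]
  ring

lemma conj_sum_fourier (n : ℕ) (t : Torus) :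
    (starRingEnd ℂ) (∑ a ∈ Finset.range n, fourier (a:ℤ) t)
      = ∑ b ∈ Finset.range n, fourier (-(b:ℤ)) t := by
  rw [map_sum]
  exact Finset.sum_congr rfl fun b _ => (fourier_neg).symm

lemma expand_kernel (n : ℕ) (t : Torus) (k : ℤ) :
    (fourier (n:ℤ) t - fourier (-(n:ℤ)) t) *
      ((∑ a ∈ Finset.range n, fourier (a:ℤ) t) *
        (starRingEnd ℂ) (∑ a ∈ Finset.range n, fourier (a:ℤ) t)) * fourier (-k) t
      = ∑ a ∈ Finset.range n, ∑ b ∈ Finset.range n,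
        (fourier ((n:ℤ) + a - b - k) t - fourier (-(n:ℤ) + a - b - k) t) := by
  rw [conj_sum_fourier, Finset.sum_mul_sum]
  simp only [Finset.mul_sum, Finset.sum_mul]
  refine Finset.sum_congr rfl fun a _ => Finset.sum_congr rfl fun b _ => ?_
  rw [key4, key4]
  ring

lemma sum_ite_cnt (n : ℕ) (d : ℤ) (C : ℂ) :
    ∑ a ∈ Finset.range n, ∑ b ∈ Finset.range n, (if (a:ℤ) - (b:ℤ) = d then C else 0)
      = (cnt n d : ℂ) * C := by
  rw [← Finset.sum_product', cnt, ← Finset.sum_filter, Finset.sum_const, nsmul_eq_mul]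

lemma hinner (n : ℕ) (hn : 0 < n) (k : ℤ) (hk : k.natAbs < n) :
    ∑ j ∈ Finset.range (3*n),
      ((fourier (n:ℤ) (pt (3*n) j) - fourier (-(n:ℤ)) (pt (3*n) j)) *
        ((∑ a ∈ Finset.range n, fourier (a:ℤ) (pt (3*n) j)) *
          (starRingEnd ℂ) (∑ a ∈ Finset.range n, fourier (a:ℤ) (pt (3*n) j)))) *
        fourier (-k) (pt (3*n) j)
      = (3*n : ℂ) * k := by
  simp only [expand_kernel]
  rw [Finset.sum_comm]
  have hswap : ∀ a ∈ Finset.range n,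
      ∑ j ∈ Finset.range (3*n), ∑ b ∈ Finset.range n,
        (fourier ((n:ℤ) + a - b - k) (pt (3*n) j) - fourier (-(n:ℤ) + a - b - k) (pt (3*n) j))
      = ∑ b ∈ Finset.range n,
        ((if (a:ℤ) - b = k - n then ((3*n : ℕ) : ℂ) else 0)
          - (if (a:ℤ) - b = k + n then ((3*n : ℕ) : ℂ) else 0)) := by
    intro a ha
    rw [Finset.sum_comm]
    refine Finset.sum_congr rfl fun b hb => ?_
    simp only [Finset.mem_range] at ha hb
    rw [Finset.sum_sub_distrib,
      sum_fourier_pt (3*n) (by omega) _ (by rw [abs_lt]; omega),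
      sum_fourier_pt (3*n) (by omega) _ (by rw [abs_lt]; omega)]
    congr 1
    · exact if_congr (by omega) rfl rfl
    · exact if_congr (by omega) rfl rfl
  rw [Finset.sum_congr rfl hswap]
  simp only [Finset.sum_sub_distrib]
  rw [sum_ite_cnt, sum_ite_cnt, ← sub_mul]
  have hc : ((cnt n (k - n) : ℂ) - (cnt n (k + n) : ℂ)) = (k : ℂ) := by
    have := cnt_combo n k hk.le
    exact_mod_cast congrArg (Int.cast : ℤ → ℂ) this
  rw [hc]
  push_cast
  ring


lemma fourier_sub_arg (k : ℤ) (x t : Torus) :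
    fourier k (x - t) = fourier k x * fourier (-k) t := by
  have hone : fourier k t * fourier (-k) t = 1 := by
    rw [fourier_mul_fourier]
    simp only [add_neg_cancel]
    exact fourier_zero
  have h0 : fourier k (x - t) * fourier k t = fourier k x := by
    rw [fourier_apply, fourier_apply, fourier_apply, ← Circle.coe_mul,
      ← AddCircle.toCircle_add, ← smul_add, sub_add_cancel]
  calc fourier k (x - t) = fourier k (x-t) * (fourier k t * fourier (-k) t) := by
        rw [hone, mul_one]
    _ = (fourier k (x-t) * fourier k t) * fourier (-k) t := by ring
    _ = fourier k x * fourier (-k) t := by rw [h0]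

lemma sum_normsq_fourier (n : ℕ) (hn : 0 < n) :
    ∑ j ∈ Finset.range (3*n),
      ((∑ a ∈ Finset.range n, fourier (a:ℤ) (pt (3*n) j)) *
        (starRingEnd ℂ) (∑ a ∈ Finset.range n, fourier (a:ℤ) (pt (3*n) j)))
      = ((3*n : ℕ) : ℂ) * n := by
  have hexp : ∀ j, ((∑ a ∈ Finset.range n, fourier (a:ℤ) (pt (3*n) j)) *
        (starRingEnd ℂ) (∑ a ∈ Finset.range n, fourier (a:ℤ) (pt (3*n) j)))
      = ∑ a ∈ Finset.range n, ∑ b ∈ Finset.range n, fourier ((a:ℤ) - b) (pt (3*n) j) := by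
    intro j
    rw [conj_sum_fourier, Finset.sum_mul_sum]
    refine Finset.sum_congr rfl fun a _ => Finset.sum_congr rfl fun b _ => ?_
    rw [fourier_mul_fourier, sub_eq_add_neg]
  simp only [hexp]
  rw [Finset.sum_comm]
  have : ∀ a ∈ Finset.range n,
      ∑ j ∈ Finset.range (3*n), ∑ b ∈ Finset.range n, fourier ((a:ℤ) - b) (pt (3*n) j)
      = ∑ b ∈ Finset.range n, (if (a:ℤ) - b = 0 then ((3*n : ℕ) : ℂ) else 0) := by
    intro a ha
    rw [Finset.sum_comm]
    refine Finset.sum_congr rfl fun b hb => ?_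
    simp only [Finset.mem_range] at ha hb
    exact sum_fourier_pt (3*n) (by omega) _ (by rw [abs_lt]; omega)
  rw [Finset.sum_congr rfl this, sum_ite_cnt, cnt_eq]
  simp
  ring

lemma bernstein (p : ℝ≥0∞) (hp : 1 ≤ p) (M : ℕ) (c : ℤ → ℂ) :
    eLpNorm (P M fun k => (k:ℂ) * c k) p volume
      ≤ ENNReal.ofReal (2*(M+1)) * eLpNorm (P M c) p volume := by
  have hn : 0 < M + 1 := Nat.succ_pos M
  have hm0 : ((3*(M+1) : ℕ) : ℂ) ≠ 0 := Nat.cast_ne_zero.mpr (by omega)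
  set Kf : ℕ → ℂ := fun j =>
    (fourier ((M+1:ℕ):ℤ) (pt (3*(M+1)) j) - fourier (-((M+1:ℕ):ℤ)) (pt (3*(M+1)) j)) *
      ((∑ a ∈ Finset.range (M+1), fourier (a:ℤ) (pt (3*(M+1)) j)) *
        (starRingEnd ℂ) (∑ a ∈ Finset.range (M+1), fourier (a:ℤ) (pt (3*(M+1)) j))) with hKf
  -- the representation
  have hrep : P M (fun k => (k:ℂ) * c k)
      = fun x => ∑ j ∈ Finset.range (3*(M+1)),
          (Kf j / ((3*(M+1) : ℕ) : ℂ)) * P M c (x - pt (3*(M+1)) j) := by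
    funext x
    have hRHS : ∀ j, (Kf j / ((3*(M+1) : ℕ) : ℂ)) * P M c (x - pt (3*(M+1)) j)
        = ∑ k ∈ Finset.Icc (-(M:ℤ)) M,
            (Kf j / ((3*(M+1) : ℕ) : ℂ)) * (c k * (fourier k x * fourier (-k) (pt (3*(M+1)) j))) := by
      intro j
      rw [P, Finset.mul_sum]
      refine Finset.sum_congr rfl fun k _ => ?_
      rw [fourier_sub_arg]
    simp only [hRHS]
    rw [Finset.sum_comm, P]
    refine Finset.sum_congr rfl fun k hk => ?_
    have hk' : k.natAbs < M + 1 := by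
      simp only [Finset.mem_Icc] at hk
      omega
    refine Eq.symm ?_
    calc ∑ j ∈ Finset.range (3*(M+1)),
          (Kf j / ((3*(M+1) : ℕ) : ℂ)) * (c k * (fourier k x * fourier (-k) (pt (3*(M+1)) j)))
        = (c k * fourier k x / ((3*(M+1) : ℕ) : ℂ)) *
            ∑ j ∈ Finset.range (3*(M+1)), Kf j * fourier (-k) (pt (3*(M+1)) j) := by
          rw [Finset.mul_sum]
          exact Finset.sum_congr rfl fun j _ => by ring
      _ = (k : ℂ) * c k * fourier k x := by
          simp only [hKf]
          rw [hinner (M+1) hn k hk']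
          have hC : ((M:ℂ) + 1) ≠ 0 := Nat.cast_add_one_ne_zero M
          push_cast
          field_simp
  -- kernel size
  have hKsum : ∑ j ∈ Finset.range (3*(M+1)), ‖Kf j‖ ≤ 2 * (3*(M+1)) * (M+1) := by
    have hterm : ∀ j, ‖Kf j‖ ≤ 2 * Complex.normSq (∑ a ∈ Finset.range (M+1),
        fourier (a:ℤ) (pt (3*(M+1)) j)) := by
      intro j
      rw [hKf]
      simp only []
      rw [norm_mul, Complex.mul_conj]
      have h2 : ‖fourier ((M+1:ℕ):ℤ) (pt (3*(M+1)) j) - fourier (-((M+1:ℕ):ℤ)) (pt (3*(M+1)) j)‖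
          ≤ 2 := by
        refine (norm_sub_le _ _).trans ?_
        have e1 : ‖fourier ((M+1:ℕ):ℤ) (pt (3*(M+1)) j)‖ = 1 := norm_fourier _ _
        have e2 : ‖fourier (-((M+1:ℕ):ℤ)) (pt (3*(M+1)) j)‖ = 1 := norm_fourier _ _
        rw [e1, e2]; norm_num
      have h3 : ‖((Complex.normSq (∑ a ∈ Finset.range (M+1),
          fourier (a:ℤ) (pt (3*(M+1)) j)) : ℝ) : ℂ)‖ = Complex.normSq (∑ a ∈ Finset.range (M+1),
          fourier (a:ℤ) (pt (3*(M+1)) j)) := by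
        rw [Complex.norm_real, Real.norm_eq_abs, _root_.abs_of_nonneg (Complex.normSq_nonneg _)]
      rw [h3]
      exact mul_le_mul_of_nonneg_right h2 (Complex.normSq_nonneg _)
    have hsq : ∑ j ∈ Finset.range (3*(M+1)), Complex.normSq (∑ a ∈ Finset.range (M+1),
        fourier (a:ℤ) (pt (3*(M+1)) j)) = (3*(M+1)) * (M+1) := by
      have := sum_normsq_fourier (M+1) hn
      have h2 : ∑ j ∈ Finset.range (3*(M+1)), ((Complex.normSq (∑ a ∈ Finset.range (M+1),
          fourier (a:ℤ) (pt (3*(M+1)) j)) : ℝ) : ℂ) = ((3*(M+1) : ℕ) : ℂ) * ((M+1 : ℕ) : ℂ) := by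
        rw [← this]
        refine Finset.sum_congr rfl fun j _ => ?_
        rw [Complex.mul_conj]
      have h3 := congrArg Complex.re h2
      push_cast at h3 ⊢
      simpa using h3
    calc ∑ j ∈ Finset.range (3*(M+1)), ‖Kf j‖
        ≤ ∑ j ∈ Finset.range (3*(M+1)), 2 * Complex.normSq (∑ a ∈ Finset.range (M+1),
            fourier (a:ℤ) (pt (3*(M+1)) j)) := Finset.sum_le_sum fun j _ => hterm j
      _ = 2 * ((3*(M+1)) * (M+1)) := by rw [← Finset.mul_sum, hsq]
      _ = 2 * (3*(M+1)) * (M+1) := by ring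
  -- norm estimate
  rw [hrep]
  have hfun : (fun x => ∑ j ∈ Finset.range (3*(M+1)),
      (Kf j / ((3*(M+1) : ℕ) : ℂ)) * P M c (x - pt (3*(M+1)) j))
      = ∑ j ∈ Finset.range (3*(M+1)), fun x =>
        (Kf j / ((3*(M+1) : ℕ) : ℂ)) * P M c (x - pt (3*(M+1)) j) := by
    funext x
    rw [Finset.sum_apply]
  rw [hfun]
  have hmeas : ∀ j ∈ Finset.range (3*(M+1)), AEStronglyMeasurable
      (fun x => (Kf j / ((3*(M+1) : ℕ) : ℂ)) * P M c (x - pt (3*(M+1)) j)) volume := by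
    intro j _
    exact (continuous_const.mul ((contP M c).comp
      (continuous_id.sub continuous_const))).aestronglyMeasurable
  refine (eLpNorm_sum_le hmeas hp).trans ?_
  have hterm : ∀ j ∈ Finset.range (3*(M+1)),
      eLpNorm (fun x => (Kf j / ((3*(M+1) : ℕ) : ℂ)) * P M c (x - pt (3*(M+1)) j)) p volume
      = (‖Kf j / ((3*(M+1) : ℕ) : ℂ)‖₊ : ℝ≥0∞) * eLpNorm (P M c) p volume := by
    intro j _
    have h1 : (fun x => (Kf j / ((3*(M+1) : ℕ) : ℂ)) * P M c (x - pt (3*(M+1)) j))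
        = (Kf j / ((3*(M+1) : ℕ) : ℂ)) • ((P M c) ∘ (fun x => x - pt (3*(M+1)) j)) := rfl
    rw [h1, eLpNorm_const_smul]
    congr 1
    exact eLpNorm_comp_measurePreserving (contP M c).aestronglyMeasurable
      (measurePreserving_sub_right volume _)
  rw [Finset.sum_congr rfl hterm, ← Finset.sum_mul]
  refine mul_le_mul_left ?_ _
  have hcast : ∑ j ∈ Finset.range (3*(M+1)), (‖Kf j / ((3*(M+1) : ℕ) : ℂ)‖₊ : ℝ≥0∞)
      = ENNReal.ofReal (∑ j ∈ Finset.range (3*(M+1)), ‖Kf j / ((3*(M+1) : ℕ) : ℂ)‖) := by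
    rw [ENNReal.ofReal_sum_of_nonneg fun j _ => norm_nonneg _]
    exact Finset.sum_congr rfl fun j _ => (ofReal_norm_eq_enorm _).symm
  rw [hcast]
  refine ENNReal.ofReal_le_ofReal ?_
  have hnormdiv : ∀ j, ‖Kf j / ((3*(M+1) : ℕ) : ℂ)‖ = ‖Kf j‖ / (3*(M+1)) := by
    intro j
    rw [norm_div, Complex.norm_natCast]
    push_cast
    ring
  calc ∑ j ∈ Finset.range (3*(M+1)), ‖Kf j / ((3*(M+1) : ℕ) : ℂ)‖
      = (∑ j ∈ Finset.range (3*(M+1)), ‖Kf j‖) / (3*(M+1)) := by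
        rw [Finset.sum_div]
        exact Finset.sum_congr rfl fun j _ => hnormdiv j
    _ ≤ (2 * (3*(M+1)) * (M+1)) / (3*(M+1)) := by
        gcongr
    _ = 2 * (M+1) := by
        field_simp

lemma P_congr (M : ℕ) (c₁ c₂ : ℤ → ℂ) (h : ∀ k ∈ Finset.Icc (-(M:ℤ)) M, c₁ k = c₂ k) :
    P M c₁ = P M c₂ := by
  funext x
  exact Finset.sum_congr rfl fun k hk => by rw [h k hk]

lemma bernstein_iter (p : ℝ≥0∞) (hp : 1 ≤ p) (M : ℕ) (c : ℤ → ℂ) (i : ℕ) :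
    eLpNorm (P M fun k => (k:ℂ)^i * c k) p volume
      ≤ ENNReal.ofReal ((2*(M+1))^i) * eLpNorm (P M c) p volume := by
  induction i with
  | zero =>
    simp only [pow_zero, one_mul, ENNReal.ofReal_one]
    exact le_of_eq (by norm_num)
  | succ i ih =>
    have h1 : (P M fun k => (k:ℂ)^(i+1) * c k) = (P M fun k => (k:ℂ) * ((k:ℂ)^i * c k)) := by
      refine P_congr M _ _ fun k _ => by ring
    rw [h1]
    refine (bernstein p hp M _).trans ?_
    refine (mul_le_mul_right ih _).trans ?_
    rw [← mul_assoc, ← ENNReal.ofReal_mul (by positivity)]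
    exact le_of_eq (by rw [← pow_succ'])

lemma P_le_of_coeff_bound (p : ℝ≥0∞) (hp1 : 1 ≤ p) (hp2 : p ≠ ∞) (M : ℕ) (c : ℤ → ℂ)
    (g : Torus → ℂ) (hg : Continuous g) (σ : ℤ → ℝ) (hσ0 : ∀ k, 0 ≤ σ k)
    (hc : ∀ k ∈ Finset.Icc (-(M:ℤ)) M, ‖c k‖ ≤ σ k * ‖fourierCoeff g k‖) :
    eLpNorm (P M c) p volume
      ≤ ENNReal.ofReal (∑ k ∈ Finset.Icc (-(M:ℤ)) M, σ k) * eLpNorm g p volume := by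
  set Ig : ℝ := ∫ t : Torus, ‖g t‖ ∂AddCircle.haarAddCircle with hIg
  have hIg0 : 0 ≤ Ig := integral_nonneg fun t => norm_nonneg _
  have hS0 : 0 ≤ ∑ k ∈ Finset.Icc (-(M:ℤ)) M, σ k := Finset.sum_nonneg fun k _ => hσ0 k
  have hcoeff : ∀ k : ℤ, ‖fourierCoeff g k‖ ≤ Ig := by
    intro k
    rw [fourierCoeff]
    refine (norm_integral_le_integral_norm _).trans (le_of_eq ?_)
    rw [hIg]
    refine integral_congr_ae (Eventually.of_forall fun t => ?_)
    show ‖fourier (-k) t • g t‖ = ‖g t‖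
    rw [norm_smul, norm_fourier, one_mul]
  have hbound : ∀ x, ‖P M c x‖ ≤ (∑ k ∈ Finset.Icc (-(M:ℤ)) M, σ k) * Ig := by
    intro x
    refine (normP_le M c x).trans ?_
    rw [Finset.sum_mul]
    refine Finset.sum_le_sum fun k hk => ?_
    exact (hc k hk).trans (mul_le_mul_of_nonneg_left (hcoeff k) (hσ0 k))
  have h2π0 : ENNReal.ofReal (2*π) ≠ 0 := by
    simp only [ne_eq, ENNReal.ofReal_eq_zero, not_le]
    positivity
  have h2πt : ENNReal.ofReal (2*π) ≠ ∞ := ENNReal.ofReal_ne_top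
  have h1 : eLpNorm (P M c) p volume
      ≤ (ENNReal.ofReal (2*π)) ^ (p.toReal)⁻¹
        * ENNReal.ofReal ((∑ k ∈ Finset.Icc (-(M:ℤ)) M, σ k) * Ig) := by
    have := eLpNorm_le_of_ae_bound (μ := (volume : Measure Torus)) (p := p)
      (Eventually.of_forall hbound)
    rwa [AddCircle.measure_univ] at this
  have h2 : ENNReal.ofReal (2*π) * ENNReal.ofReal Ig = eLpNorm g 1 volume := by
    rw [eLpNorm_one_eq_lintegral_enorm,
      ← ofReal_integral_norm_eq_lintegral_enorm (integrable_torus hg volume),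
      ← ENNReal.ofReal_mul (by positivity)]
    congr 1
    rw [AddCircle.volume_eq_smul_haarAddCircle, integral_smul_measure, ENNReal.toReal_ofReal
      (by positivity), smul_eq_mul]
  have h3 : eLpNorm g 1 volume
      ≤ eLpNorm g p volume * (ENNReal.ofReal (2*π)) ^ (1 - (p.toReal)⁻¹) := by
    have h := eLpNorm_le_eLpNorm_mul_rpow_measure_univ (p := 1) (q := p) hp1
      hg.aestronglyMeasurable (μ := (volume : Measure Torus))
    rw [AddCircle.measure_univ] at h
    have hexp : 1 / (1:ℝ≥0∞).toReal - 1 / p.toReal = 1 - (p.toReal)⁻¹ := by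
      norm_num
    rwa [hexp] at h
  have key : eLpNorm (P M c) p volume * ENNReal.ofReal (2*π)
      ≤ ENNReal.ofReal (∑ k ∈ Finset.Icc (-(M:ℤ)) M, σ k) * eLpNorm g p volume
          * ENNReal.ofReal (2*π) := by
    calc eLpNorm (P M c) p volume * ENNReal.ofReal (2*π)
        ≤ ((ENNReal.ofReal (2*π)) ^ (p.toReal)⁻¹
            * ENNReal.ofReal ((∑ k ∈ Finset.Icc (-(M:ℤ)) M, σ k) * Ig)) * ENNReal.ofReal (2*π)
          := mul_le_mul_left h1 _
      _ = ENNReal.ofReal (∑ k ∈ Finset.Icc (-(M:ℤ)) M, σ k)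
            * ((ENNReal.ofReal (2*π)) ^ (p.toReal)⁻¹
              * (ENNReal.ofReal (2*π) * ENNReal.ofReal Ig)) := by
          rw [ENNReal.ofReal_mul hS0]; ring
      _ ≤ ENNReal.ofReal (∑ k ∈ Finset.Icc (-(M:ℤ)) M, σ k)
            * ((ENNReal.ofReal (2*π)) ^ (p.toReal)⁻¹
              * (eLpNorm g p volume * (ENNReal.ofReal (2*π)) ^ (1 - (p.toReal)⁻¹))) := by
          rw [h2]
          exact mul_le_mul_right (mul_le_mul_right h3 _) _
      _ = ENNReal.ofReal (∑ k ∈ Finset.Icc (-(M:ℤ)) M, σ k) * eLpNorm g p volume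
            * ((ENNReal.ofReal (2*π)) ^ (p.toReal)⁻¹
                * (ENNReal.ofReal (2*π)) ^ (1 - (p.toReal)⁻¹)) := by ring
      _ = ENNReal.ofReal (∑ k ∈ Finset.Icc (-(M:ℤ)) M, σ k) * eLpNorm g p volume
            * ENNReal.ofReal (2*π) := by
          rw [← ENNReal.rpow_add _ _ h2π0 h2πt]
          norm_num
  exact (ENNReal.mul_le_mul_iff_left h2π0 h2πt).mp key

lemma sum_inv_one_add_sq (M : ℕ) :
    ∑ k ∈ Finset.Icc (-(M:ℤ)) M, 1/(1+(k:ℝ)^2) ≤ 5 - 4/((M:ℝ)+1) := by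
  induction M with
  | zero =>
    simp
    norm_num
  | succ M ih =>
    have hins : Finset.Icc (-((M+1:ℕ)):ℤ) ((M+1:ℕ))
        = insert (-((M+1:ℕ)):ℤ) (insert (((M+1:ℕ)):ℤ) (Finset.Icc (-(M:ℤ)) M)) := by
      ext k
      simp only [Finset.mem_Icc, Finset.mem_insert]
      omega
    rw [hins, Finset.sum_insert, Finset.sum_insert]
    · have hx : (0:ℝ) < (M:ℝ) + 1 := by positivity
      have hx2 : (0:ℝ) < (M:ℝ) + 2 := by positivity
      have hkey : 2*((1:ℝ)/(1+((M:ℝ)+1)^2)) ≤ 4/((M:ℝ)+1) - 4/((M:ℝ)+1+1) := by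
        have heq : 4/((M:ℝ)+1) - 4/((M:ℝ)+1+1) = 4/(((M:ℝ)+1)*((M:ℝ)+1+1)) := by
          field_simp
          ring
        rw [heq, mul_one_div, div_le_div_iff₀ (by positivity) (by positivity)]
        nlinarith [Nat.cast_nonneg (α := ℝ) M]
      push_cast
      have h1 : (1:ℝ)/(1+(-((M:ℝ)+1))^2) = 1/(1+((M:ℝ)+1)^2) := by ring_nf
      linarith [h1, hkey, ih]
    · simp only [Finset.mem_Icc]
      omega
    · simp only [Finset.mem_insert, Finset.mem_Icc]
      omega

lemma sum_sigma_le (M : ℕ) :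
    ∑ k ∈ Finset.Icc (-(M:ℤ)) M, (2*(k:ℝ)^2+1)/(1+(k:ℝ)^2)^2 ≤ 10 := by
  have h1 : ∀ k : ℤ, (2*(k:ℝ)^2+1)/(1+(k:ℝ)^2)^2 ≤ 2 * (1/(1+(k:ℝ)^2)) := by
    intro k
    rw [mul_one_div, div_le_div_iff₀ (by positivity) (by positivity)]
    nlinarith [sq_nonneg ((k:ℝ)), sq_nonneg ((k:ℝ)^2)]
  refine (Finset.sum_le_sum fun k _ => h1 k).trans ?_
  rw [← Finset.mul_sum]
  have := sum_inv_one_add_sq M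
  have h4 : (0:ℝ) ≤ 4/((M:ℝ)+1) := by positivity
  nlinarith

lemma P_smul (M : ℕ) (a : ℂ) (c : ℤ → ℂ) :
    P M (fun k => a * c k) = a • P M c := by
  funext x
  simp only [P, Pi.smul_apply, smul_eq_mul, Finset.mul_sum]
  exact Finset.sum_congr rfl fun k _ => by ring

end MultAux

open MultAux Finset Complex

theorem multiplier_Ts_bound (p : ℝ≥0∞) (hp1 : 1 < p) (hp2 : p ≠ ∞) :
    ∃ C : ℝ, 0 < C ∧
      ∀ (s N : ℝ), 0 < s → 1 ≤ N → s * N ^ 2 ≤ 1 →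
        ∀ f : Torus → ℂ, MemLp f p volume →
          (∀ k : ℤ, N < (|k| : ℝ) → fourierCoeff f k = 0) →
          eLpNorm (mult (fun k => if (|k| : ℝ) ≤ N then
              Complex.exp (-Complex.I * s * (k : ℂ) ^ 2) - 1 + Complex.I * s * (k : ℂ) ^ 2
            else 0) f) p volume
            ≤ ENNReal.ofReal (C * s ^ 2) * eLpNorm (Jop 4 f) p volume := by
  have hp1' : 1 ≤ p := hp1.le
  refine ⟨11 * Real.exp 16 + 2, by positivity, ?_⟩
  intro s N hs hN hsN f _hf hvan
  set M := ⌊N⌋₊ with hM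
  have hN0 : (0:ℝ) ≤ N := by linarith
  have hMN : (M:ℝ) ≤ N := Nat.floor_le hN0
  have hNM : N < (M:ℝ) + 1 := Nat.lt_floor_add_one N
  have hM2N : (M:ℝ) + 1 ≤ 2*N := by linarith
  set fc : ℤ → ℂ := fourierCoeff f with hfc
  have hvan' : ∀ k : ℤ, k ∉ Finset.Icc (-(M:ℤ)) M → fc k = 0 := by
    intro k hk
    apply hvan
    simp only [Finset.mem_Icc] at hk
    have h1 : M + 1 ≤ k.natAbs := by omega
    have h2 : ((M:ℝ) + 1) ≤ (k.natAbs : ℝ) := by exact_mod_cast h1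
    rw [Nat.cast_natAbs, Int.cast_abs] at h2
    linarith
  have hmem : ∀ k ∈ Finset.Icc (-(M:ℤ)) M, |(k:ℝ)| ≤ N := by
    intro k hk
    simp only [Finset.mem_Icc] at hk
    have h1 : k.natAbs ≤ M := by omega
    have h2 : ((k.natAbs : ℤ) : ℝ) ≤ (M:ℝ) := by exact_mod_cast h1
    rw [Int.cast_natCast, Nat.cast_natAbs, Int.cast_abs] at h2
    linarith
  have hsk : ∀ k ∈ Finset.Icc (-(M:ℤ)) M, s * (k:ℝ)^2 ≤ 1 := by
    intro k hk
    have habs : |(k:ℝ)| ≤ N := hmem k hk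
    have h2 : (k:ℝ)^2 ≤ N^2 := by
      rw [← _root_.sq_abs]
      exact pow_le_pow_left₀ (abs_nonneg _) habs 2
    nlinarith
  -- representation of Jop 4 f
  have hJop : Jop 4 f = P M (fun k => (((1+(k:ℝ)^2)^2 : ℝ) : ℂ) * fc k) := by
    funext x
    rw [Jop, mult]
    rw [tsum_eq_sum (s := Finset.Icc (-(M:ℤ)) M) (fun k hk => by rw [← hfc, hvan' k hk, mul_zero, zero_mul])]
    refine Finset.sum_congr rfl fun k hk => ?_
    have h42 : ((4:ℝ)/2) = ((2:ℕ):ℝ) := by norm_num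
    rw [h42, Real.rpow_natCast, ← hfc]
  have hgcont : Continuous (Jop 4 f) := hJop ▸ contP M _
  have hgcoeff : ∀ k ∈ Finset.Icc (-(M:ℤ)) M,
      fourierCoeff (Jop 4 f) k = (((1+(k:ℝ)^2)^2 : ℝ) : ℂ) * fc k := by
    intro k hk
    rw [hJop, fourierCoeff_P, if_pos hk]
  set L := eLpNorm (Jop 4 f) p volume with hL
  -- base estimate
  have hbase : eLpNorm (P M (fun k => (k:ℂ)^4 * fc k)) p volume ≤ ENNReal.ofReal 11 * L := by
    have hck : ∀ k ∈ Finset.Icc (-(M:ℤ)) M, (k:ℂ)^4 * fc k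
        = (((1+(k:ℝ)^2)^2 : ℝ) : ℂ) * fc k + (-((((2*(k:ℝ)^2+1)) : ℝ) : ℂ)) * fc k := by
      intro k _
      push_cast
      ring
    have hsplit : P M (fun k => (k:ℂ)^4 * fc k)
        = (P M (fun k => (((1+(k:ℝ)^2)^2 : ℝ) : ℂ) * fc k))
          + (P M (fun k => (-((((2*(k:ℝ)^2+1)) : ℝ) : ℂ)) * fc k)) := by
      rw [P_congr M _ _ hck]
      funext x
      simp only [P, Pi.add_apply, add_mul, Finset.sum_add_distrib]
    rw [hsplit]
    refine (eLpNorm_add_le (contP M _).aestronglyMeasurable (contP M _).aestronglyMeasurable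
      hp1').trans ?_
    have hA : eLpNorm (P M (fun k => (((1+(k:ℝ)^2)^2 : ℝ) : ℂ) * fc k)) p volume = L := by
      rw [hL, hJop]
    have hB : eLpNorm (P M (fun k => (-((((2*(k:ℝ)^2+1)) : ℝ) : ℂ)) * fc k)) p volume
        ≤ ENNReal.ofReal 10 * L := by
      refine (P_le_of_coeff_bound p hp1' hp2 M _ (Jop 4 f) hgcont
        (fun k => (2*(k:ℝ)^2+1)/(1+(k:ℝ)^2)^2) (fun k => by positivity) ?_).trans ?_
      · intro k hk
        rw [hgcoeff k hk]
        have h1 : ‖(-((((2*(k:ℝ)^2+1)) : ℝ) : ℂ))‖ = 2*(k:ℝ)^2+1 := by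
          rw [norm_neg, Complex.norm_real, Real.norm_eq_abs, _root_.abs_of_nonneg (by positivity)]
        have h2 : ‖(((1+(k:ℝ)^2)^2 : ℝ) : ℂ)‖ = (1+(k:ℝ)^2)^2 := by
          rw [Complex.norm_real, Real.norm_eq_abs, _root_.abs_of_nonneg (by positivity)]
        rw [norm_mul, norm_mul, h1, h2, ← mul_assoc]
        refine mul_le_mul_of_nonneg_right (le_of_eq ?_) (norm_nonneg _)
        rw [div_mul_cancel₀ _ (by positivity : ((1:ℝ)+(k:ℝ)^2)^2 ≠ 0)]
      · exact mul_le_mul_left (ENNReal.ofReal_le_ofReal (sum_sigma_le M)) _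
    rw [hA]
    calc L + eLpNorm (P M (fun k => (-((((2*(k:ℝ)^2+1)) : ℝ) : ℂ)) * fc k)) p volume
        ≤ L + ENNReal.ofReal 10 * L := add_le_add_right hB _
      _ = ENNReal.ofReal 11 * L := by
          rw [show (11:ℝ) = 1 + 10 by norm_num, ENNReal.ofReal_add one_pos.le (by norm_num),
            add_mul, ENNReal.ofReal_one, one_mul]
  -- representation of the multiplier
  have hmult : (mult (fun k => if (|k| : ℝ) ≤ N then
        Complex.exp (-Complex.I * s * (k : ℂ) ^ 2) - 1 + Complex.I * s * (k : ℂ) ^ 2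
      else 0) f)
      = P M (fun k => (Complex.exp (-Complex.I * s * (k:ℂ)^2) - 1 + Complex.I * s * (k:ℂ)^2)
          * fc k) := by
    funext x
    rw [mult]
    rw [tsum_eq_sum (s := Finset.Icc (-(M:ℤ)) M)
      (fun k hk => by rw [← hfc, hvan' k hk, mul_zero, zero_mul])]
    refine Finset.sum_congr rfl fun k hk => ?_
    rw [if_pos (hmem k hk), ← hfc]
  set nn := 2*M+3 with hnn
  -- coefficient decomposition
  have hdecomp : ∀ k ∈ Finset.Icc (-(M:ℤ)) M,
      (Complex.exp (-Complex.I * s * (k:ℂ)^2) - 1 + Complex.I * s * (k:ℂ)^2) * fc k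
      = (Complex.exp (-Complex.I * s * (k:ℂ)^2)
            - ∑ i ∈ Finset.range nn, (-Complex.I * s * (k:ℂ)^2)^i / (Nat.factorial i)) * fc k
        + ∑ j ∈ Finset.Ico 2 nn,
            ((-Complex.I * s)^j / (Nat.factorial j)) * ((k:ℂ)^(2*j) * fc k) := by
    intro k _
    have hsum2 : ∑ i ∈ Finset.range nn, (-Complex.I * s * (k:ℂ)^2)^i / (Nat.factorial i)
        = (1 + (-Complex.I * s * (k:ℂ)^2))
          + ∑ i ∈ Finset.Ico 2 nn, (-Complex.I * s * (k:ℂ)^2)^i / (Nat.factorial i) := by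
      rw [Finset.range_eq_Ico,
        ← Finset.sum_Ico_consecutive _ (by omega : 0 ≤ 2) (by omega : 2 ≤ nn)]
      congr 1
      rw [show Finset.Ico 0 2 = Finset.range 2 from (Finset.range_eq_Ico 2).symm]
      rw [Finset.sum_range_succ, Finset.sum_range_one]
      norm_num [Nat.factorial]
    have hS : ∑ j ∈ Finset.Ico 2 nn,
        ((-Complex.I * s)^j / (Nat.factorial j)) * ((k:ℂ)^(2*j) * fc k)
        = (∑ i ∈ Finset.Ico 2 nn, (-Complex.I * s * (k:ℂ)^2)^i / (Nat.factorial i)) * fc k := by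
      rw [Finset.sum_mul]
      refine Finset.sum_congr rfl fun j _ => ?_
      rw [show (-Complex.I * (s:ℂ) * (k:ℂ)^2)^j
          = ((-Complex.I * (s:ℂ))^j * ((k:ℂ)^2)^j) from mul_pow _ _ j, ← pow_mul]
      ring
    rw [hsum2, hS]
    ring
  have hPdecomp : P M (fun k =>
      (Complex.exp (-Complex.I * s * (k:ℂ)^2) - 1 + Complex.I * s * (k:ℂ)^2) * fc k)
      = (P M (fun k => (Complex.exp (-Complex.I * s * (k:ℂ)^2)
            - ∑ i ∈ Finset.range nn, (-Complex.I * s * (k:ℂ)^2)^i / (Nat.factorial i)) * fc k))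
        + fun x => ∑ j ∈ Finset.Ico 2 nn,
            P M (fun k => ((-Complex.I * s)^j / (Nat.factorial j)) * ((k:ℂ)^(2*j) * fc k)) x := by
    rw [P_congr M _ _ hdecomp]
    funext x
    simp only [P, Pi.add_apply, add_mul, Finset.sum_add_distrib]
    congr 1
    simp only [Finset.sum_mul]
    exact Finset.sum_comm
  rw [hmult, hPdecomp]
  have hF0 : (0:ℝ) < (Nat.factorial nn : ℝ) := by exact_mod_cast Nat.factorial_pos nn
  -- remainder estimate
  have hFAle : eLpNorm (P M (fun k => (Complex.exp (-Complex.I * s * (k:ℂ)^2)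
      - ∑ i ∈ Finset.range nn, (-Complex.I * s * (k:ℂ)^2)^i / (Nat.factorial i)) * fc k)) p volume
      ≤ ENNReal.ofReal (2*s^2) * L := by
    refine (P_le_of_coeff_bound p hp1' hp2 M _ (Jop 4 f) hgcont
      (fun _ => 2*s^2/(Nat.factorial nn)) (fun k => by positivity) ?_).trans ?_
    · intro k hk
      rw [hgcoeff k hk, norm_mul, norm_mul]
      have h2' : ‖(((1+(k:ℝ)^2)^2 : ℝ) : ℂ)‖ = (1+(k:ℝ)^2)^2 := by
        rw [Complex.norm_real, Real.norm_eq_abs, _root_.abs_of_nonneg (by positivity)]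
      rw [h2', ← mul_assoc]
      refine mul_le_mul_of_nonneg_right ?_ (norm_nonneg _)
      have habs : ‖(-Complex.I * ↑s * (k:ℂ)^2)‖ = s * (k:ℝ)^2 := by
        rw [norm_mul, norm_mul]
        have e1 : ‖(-Complex.I)‖ = 1 := by simp
        have e2 : ‖((s:ℝ):ℂ)‖ = s := by
          rw [Complex.norm_real, Real.norm_eq_abs, _root_.abs_of_pos hs]
        have e3 : ‖((k:ℂ)^2)‖ = (k:ℝ)^2 := by
          rw [norm_pow]
          have : ‖((k:ℤ):ℂ)‖ = |(k:ℝ)| := by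
            rw [show ((k:ℤ):ℂ) = (((k:ℝ)):ℂ) by push_cast; rfl, Complex.norm_real, Real.norm_eq_abs]
          rw [this, _root_.sq_abs]
        rw [e1, e2, e3, one_mul]
      have hzle : ‖(-Complex.I * ↑s * (k:ℂ)^2)‖ ≤ 1 := by
        rw [habs]; exact hsk k hk
      have hexpb := Complex.exp_bound hzle (n := nn) (by omega)
      refine hexpb.trans ?_
      rw [habs]
      have hsknn : (0:ℝ) ≤ s * (k:ℝ)^2 := by positivity
      have hb1 : (s*(k:ℝ)^2)^nn ≤ (s*(k:ℝ)^2)^2 :=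
        pow_le_pow_of_le_one hsknn (hsk k hk) (by omega)
      have hq : (0:ℝ) < (nn:ℝ) := by
        have : 0 < nn := by omega
        exact_mod_cast this
      have hb2 : ((nn.succ : ℝ) * (((Nat.factorial nn : ℝ)) * (nn:ℝ))⁻¹)
          ≤ 2 / (Nat.factorial nn) := by
        have h21 : (nn.succ : ℝ) ≤ 2 * (nn:ℝ) := by
          have : nn + 1 ≤ 2*nn := by omega
          exact_mod_cast this
        rw [div_eq_mul_inv, mul_inv]
        calc (nn.succ : ℝ) * ((Nat.factorial nn : ℝ)⁻¹ * (nn:ℝ)⁻¹)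
            ≤ (2*(nn:ℝ)) * ((Nat.factorial nn : ℝ)⁻¹ * (nn:ℝ)⁻¹) :=
              mul_le_mul_of_nonneg_right h21 (by positivity)
          _ = 2 * (Nat.factorial nn : ℝ)⁻¹ := by
              field_simp
      calc (s*(k:ℝ)^2)^nn * ((nn.succ : ℝ) * (((Nat.factorial nn : ℝ)) * (nn:ℝ))⁻¹)
          ≤ (s*(k:ℝ)^2)^2 * (2/(Nat.factorial nn)) :=
            mul_le_mul hb1 hb2 (by positivity) (by positivity)
        _ = 2*s^2/(Nat.factorial nn) * ((k:ℝ)^2)^2 := by ring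
        _ ≤ 2*s^2/(Nat.factorial nn) * (1+(k:ℝ)^2)^2 := by
            refine mul_le_mul_of_nonneg_left ?_ (by positivity)
            nlinarith [sq_nonneg ((k:ℝ))]
    · refine mul_le_mul_left (ENNReal.ofReal_le_ofReal ?_) _
      rw [Finset.sum_const, nsmul_eq_mul]
      have hcard : (Finset.Icc (-(M:ℤ)) M).card = 2*M+1 := by
        rw [Int.card_Icc]
        omega
      rw [hcard]
      have h1 : ((2*M+1 : ℕ) : ℝ) ≤ (Nat.factorial nn : ℝ) := by
        have : 2*M+1 ≤ Nat.factorial nn := le_trans (by omega) (Nat.self_le_factorial nn)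
        exact_mod_cast this
      calc ((2*M+1:ℕ):ℝ) * (2*s^2/(Nat.factorial nn))
          ≤ (Nat.factorial nn : ℝ) * (2*s^2/(Nat.factorial nn)) :=
            mul_le_mul_of_nonneg_right h1 (by positivity)
        _ = 2*s^2 := by field_simp
  -- series terms
  have hterm : ∀ j ∈ Finset.Ico 2 nn,
      eLpNorm (P M (fun k => ((-Complex.I * s)^j / (Nat.factorial j))
          * ((k:ℂ)^(2*j) * fc k))) p volume
      ≤ ENNReal.ofReal (11 * (s^2 * 16^(j-2) / (Nat.factorial j))) * L := by
    intro j hj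
    simp only [Finset.mem_Ico] at hj
    obtain ⟨hj2, hjnn⟩ := hj
    have hFj : (0:ℝ) < (Nat.factorial j:ℝ) := by exact_mod_cast Nat.factorial_pos j
    have hsm : P M (fun k => ((-Complex.I * s)^j / (Nat.factorial j)) * ((k:ℂ)^(2*j) * fc k))
        = ((-Complex.I * (s:ℂ))^j / ((Nat.factorial j : ℕ) : ℂ))
            • P M (fun k => (k:ℂ)^(2*j) * fc k) := P_smul M _ _
    rw [hsm, eLpNorm_const_smul]
    have hnorm : ‖(-Complex.I * (s:ℂ))^j / (((Nat.factorial j : ℕ)) : ℂ)‖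
        = s^j / (Nat.factorial j) := by
      rw [norm_div, norm_pow, Complex.norm_natCast]
      congr 2
      rw [norm_mul, norm_neg, Complex.norm_I, one_mul, Complex.norm_real,
        Real.norm_eq_abs, _root_.abs_of_pos hs]
    have hP2j : P M (fun k => (k:ℂ)^(2*j) * fc k)
        = P M (fun k => (k:ℂ)^(2*j-4) * ((k:ℂ)^4 * fc k)) := by
      refine P_congr M _ _ fun k _ => ?_
      rw [← mul_assoc, ← pow_add]
      congr 2
      omega
    have hchain : eLpNorm (P M (fun k => (k:ℂ)^(2*j) * fc k)) p volume
        ≤ ENNReal.ofReal ((2*((M:ℝ)+1))^(2*j-4)) * (ENNReal.ofReal 11 * L) := by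
      rw [hP2j]
      exact (bernstein_iter p hp1' M (fun k => (k:ℂ)^4 * fc k) (2*j-4)).trans
        (mul_le_mul_right hbase _)
    have hc1 : ‖(-Complex.I * (s:ℂ))^j / (((Nat.factorial j : ℕ)) : ℂ)‖ₑ
        = ENNReal.ofReal (s^j / (Nat.factorial j)) := by
      rw [← ofReal_norm_eq_enorm, hnorm]
    rw [hc1]
    refine (mul_le_mul_right hchain _).trans ?_
    have hreal : s^j/(Nat.factorial j) * ((2*((M:ℝ)+1))^(2*j-4) * 11)
        ≤ 11 * (s^2 * 16^(j-2) / (Nat.factorial j)) := by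
      have hkey : s^(j-2) * (2*((M:ℝ)+1))^(2*(j-2)) ≤ 16^(j-2) := by
        rw [pow_mul, ← mul_pow]
        refine pow_le_pow_left₀ (by positivity) ?_ _
        have hMsq : (2*((M:ℝ)+1))^2 ≤ 16*N^2 := by
          nlinarith [hM2N, Nat.cast_nonneg (α := ℝ) M]
        calc s * (2*((M:ℝ)+1))^2 ≤ s * (16*N^2) := mul_le_mul_of_nonneg_left hMsq hs.le
          _ = 16*(s*N^2) := by ring
          _ ≤ 16 := by linarith
      have hj4 : 2*j-4 = 2*(j-2) := by omega
      have hjsplit : s^j = s^2 * s^(j-2) := by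
        rw [← pow_add]
        congr 1
        omega
      rw [hj4, hjsplit]
      calc s^2*s^(j-2)/(Nat.factorial j) * ((2*((M:ℝ)+1))^(2*(j-2)) * 11)
          = 11 * (s^2 * (s^(j-2) * (2*((M:ℝ)+1))^(2*(j-2))) / (Nat.factorial j)) := by ring
        _ ≤ 11 * (s^2 * 16^(j-2) / (Nat.factorial j)) := by
            refine mul_le_mul_of_nonneg_left ?_ (by norm_num)
            rw [div_le_div_iff₀ hFj hFj]
            refine mul_le_mul_of_nonneg_right ?_ hFj.le
            exact mul_le_mul_of_nonneg_left hkey (sq_nonneg s)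
    calc ENNReal.ofReal (s^j/(Nat.factorial j))
          * (ENNReal.ofReal ((2*((M:ℝ)+1))^(2*j-4)) * (ENNReal.ofReal 11 * L))
        = ENNReal.ofReal (s^j/(Nat.factorial j) * ((2*((M:ℝ)+1))^(2*j-4) * 11)) * L := by
          rw [ENNReal.ofReal_mul (by positivity), ENNReal.ofReal_mul (by positivity)]
          ring
      _ ≤ ENNReal.ofReal (11 * (s^2 * 16^(j-2) / (Nat.factorial j))) * L :=
          mul_le_mul_left (ENNReal.ofReal_le_ofReal hreal) _
  -- sum of the series coefficients
  have hsum : ∑ j ∈ Finset.Ico 2 nn, (11 * (s^2 * 16^(j-2) / (Nat.factorial j)))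
      ≤ 11 * Real.exp 16 * s^2 := by
    have hcongr : ∀ j ∈ Finset.Ico 2 nn, 11 * (s^2 * 16^(j-2) / (Nat.factorial j))
        = 11*s^2 * ((16:ℝ)^(j-2)/(Nat.factorial j)) := fun j _ => by ring
    rw [Finset.sum_congr rfl hcongr, ← Finset.mul_sum]
    have h2 : ∑ j ∈ Finset.Ico 2 nn, (16:ℝ)^(j-2)/(Nat.factorial j) ≤ Real.exp 16 := by
      rw [Finset.sum_Ico_eq_sum_range]
      refine (Finset.sum_le_sum fun i _ => ?_).trans
        (Real.sum_le_exp_of_nonneg (by norm_num) (nn-2))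
      have hidx : 2 + i - 2 = i := by omega
      rw [hidx]
      exact div_le_div_of_nonneg_left (by positivity) (by positivity)
        (by exact_mod_cast Nat.factorial_le (by omega : i ≤ 2 + i))
    calc 11*s^2 * ∑ j ∈ Finset.Ico 2 nn, (16:ℝ)^(j-2)/(Nat.factorial j)
        ≤ 11*s^2 * Real.exp 16 := mul_le_mul_of_nonneg_left h2 (by positivity)
      _ = 11 * Real.exp 16 * s^2 := by ring
  -- sum estimate for the series part
  have hFS : eLpNorm (fun x => ∑ j ∈ Finset.Ico 2 nn,
      P M (fun k => ((-Complex.I * s)^j / (Nat.factorial j)) * ((k:ℂ)^(2*j) * fc k)) x) p volume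
      ≤ ENNReal.ofReal (11*Real.exp 16*s^2) * L := by
    have hfs2 : (fun x => ∑ j ∈ Finset.Ico 2 nn,
        P M (fun k => ((-Complex.I * s)^j / (Nat.factorial j)) * ((k:ℂ)^(2*j) * fc k)) x)
        = ∑ j ∈ Finset.Ico 2 nn,
          P M (fun k => ((-Complex.I * s)^j / (Nat.factorial j)) * ((k:ℂ)^(2*j) * fc k)) := by
      funext x
      rw [Finset.sum_apply]
    rw [hfs2]
    refine (eLpNorm_sum_le (fun j _ => (contP M _).aestronglyMeasurable) hp1').trans ?_
    refine (Finset.sum_le_sum hterm).trans ?_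
    rw [← Finset.sum_mul]
    refine mul_le_mul_left ?_ _
    rw [← ENNReal.ofReal_sum_of_nonneg (fun j _ => by positivity)]
    exact ENNReal.ofReal_le_ofReal hsum
  refine (eLpNorm_add_le (contP M _).aestronglyMeasurable
    ((continuous_finset_sum _ fun j _ => contP M _).aestronglyMeasurable) hp1').trans ?_
  refine le_trans (add_le_add hFAle hFS) (le_of_eq ?_)
  rw [← add_mul, ← ENNReal.ofReal_add (by positivity) (by positivity)]
  congr 2
  ring
end
end
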